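/- The function u(y) solving ∫_{u(y)}^{∞} ds / √(e^{2s} − 2s − 1) = y satisfies u(y) + log y → 0 as y → 0⁺. -/

import Mathlib

open Real MeasureTheory Set Filter

private lemma den_pos {s : ℝ} (hs : 0 < s) : 0 < Real.exp (2*s) - 2*s - 1 := by
  have := Real.add_one_lt_exp (x := 2*s) (by positivity)
  linarith

private lemma exp_neg_int (a : ℝ) : IntegrableOn (fun s => Real.exp (-s)) (Ioi a) := by
  simpa using exp_neg_integrableOn_Ioi a one_pos

-- lower pointwise bound
private lemma lower_pt {s : ℝ} (hs : 0 < s) :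
    Real.exp (-s) ≤ 1 / Real.sqrt (Real.exp (2*s) - 2*s - 1) := by
  have hd := den_pos hs
  have h1 : Real.sqrt (Real.exp (2*s) - 2*s - 1) ≤ Real.exp s := by
    rw [show Real.exp s = Real.sqrt (Real.exp (2*s)) by
      rw [show (2:ℝ)*s = s + s by ring, Real.exp_add, Real.sqrt_mul_self (Real.exp_pos s).le]]
    exact Real.sqrt_le_sqrt (by linarith)
  have h2 : 0 < Real.sqrt (Real.exp (2*s) - 2*s - 1) := Real.sqrt_pos.2 hd
  rw [Real.exp_neg, one_div]
  exact inv_anti₀ h2 h1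

-- key lower bound for the integral, given integrability
private lemma F_lower {a : ℝ} (ha : 0 < a)
    (hi : IntegrableOn (fun s => 1 / Real.sqrt (Real.exp (2*s) - 2*s - 1)) (Ioi a)) :
    Real.exp (-a) ≤ ∫ s in Ioi a, 1 / Real.sqrt (Real.exp (2*s) - 2*s - 1) := by
  rw [← integral_exp_neg_Ioi a]
  refine setIntegral_mono_on (exp_neg_int a) hi measurableSet_Ioi (fun s hs => ?_)
  exact lower_pt (ha.trans hs)

/-- if `u` satisfies `∫_{u(y)}^{∞} ds/√(e^{2s} − 2s − 1) = y` for all `y > 0`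
(with `u > 0`), then `u(y) + log y → 0` as `y → 0⁺`. -/
theorem stmt_4 (u : ℝ → ℝ)
    (hpos : ∀ y, 0 < y → 0 < u y)
    (hint : ∀ y, 0 < y →
      (∫ s in Set.Ioi (u y), 1 / Real.sqrt (Real.exp (2 * s) - 2 * s - 1)) = y) :
    Filter.Tendsto (fun y => u y + Real.log y) (nhdsWithin 0 (Set.Ioi 0)) (nhds 0) := by
  rw [Metric.tendsto_nhdsWithin_nhds]
  intro δ hδ
  set d : ℝ := δ/2 with hd
  have hdpos : 0 < d := by positivity
  set c : ℝ := Real.exp (-(2*d)) with hc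
  have hc1 : c < 1 := by
    rw [hc, Real.exp_lt_one_iff]; linarith
  have hc0 : 0 < c := Real.exp_pos _
  set s₀ : ℝ := max 4 (-Real.log (1 - c)) with hs₀
  have hs₀4 : (4:ℝ) ≤ s₀ := le_max_left _ _
  have hs₀pos : 0 < s₀ := by linarith
  refine ⟨Real.exp (-s₀), Real.exp_pos _, ?_⟩
  intro y hy hdy
  have hy0 : 0 < y := hy
  have hyη : y < Real.exp (-s₀) := by
    rwa [Real.dist_eq, sub_zero, abs_of_pos hy0] at hdy
  have hI := hint y hy0
  have hi : IntegrableOn (fun s => 1 / Real.sqrt (Real.exp (2 * s) - 2 * s - 1))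
      (Ioi (u y)) := by
    by_contra h
    rw [MeasureTheory.integral_undef h] at hI
    linarith
  have hnn : 0 ≤ᵐ[volume.restrict (Ioi (u y))]
      (fun s => 1 / Real.sqrt (Real.exp (2 * s) - 2 * s - 1)) :=
    Filter.Eventually.of_forall (fun s => by positivity)
  -- 2s+1 ≤ e^s for s ≥ 4
  have key : ∀ s : ℝ, 4 ≤ s → 2*s + 1 ≤ Real.exp s := by
    intro s hs
    have h1 : 1 + s/2 ≤ Real.exp (s/2) := by
      have := Real.add_one_le_exp (s/2); linarith
    have h2 : Real.exp s = Real.exp (s/2) * Real.exp (s/2) := by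
      rw [← Real.exp_add]; ring_nf
    nlinarith
  -- fractional lower bound on denominator for s > s₀
  have hden : ∀ s : ℝ, s₀ < s → c * Real.exp (2*s) ≤ Real.exp (2*s) - 2*s - 1 := by
    intro s hs
    have hs4 : 4 ≤ s := le_of_lt (lt_of_le_of_lt hs₀4 hs)
    have h1 : 2*s + 1 ≤ Real.exp s := key s hs4
    have h2 : Real.exp (-s) ≤ 1 - c := by
      have : -Real.log (1-c) ≤ s := le_of_lt (lt_of_le_of_lt (le_max_right _ _) hs)
      calc Real.exp (-s) ≤ Real.exp (Real.log (1-c)) := Real.exp_le_exp.2 (by linarith)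
        _ = 1 - c := Real.exp_log (by linarith)
    have h3 : Real.exp s = Real.exp (-s) * Real.exp (2*s) := by
      rw [← Real.exp_add]; ring_nf
    have h4 : Real.exp s ≤ (1-c) * Real.exp (2*s) := by
      rw [h3]
      exact mul_le_mul_of_nonneg_right h2 (Real.exp_pos _).le
    nlinarith
  -- u y > s₀
  have hus : s₀ < u y := by
    by_contra h
    push_neg at h
    have hsub : Ioi s₀ ⊆ Ioi (u y) := Ioi_subset_Ioi h
    have hi' : IntegrableOn (fun s => 1 / Real.sqrt (Real.exp (2 * s) - 2 * s - 1))
        (Ioi s₀) := hi.mono_set hsub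
    have h1 : Real.exp (-s₀) ≤ ∫ s in Ioi s₀,
        1 / Real.sqrt (Real.exp (2*s) - 2*s - 1) := F_lower hs₀pos hi'
    have h2 : (∫ s in Ioi s₀, 1 / Real.sqrt (Real.exp (2*s) - 2*s - 1))
        ≤ ∫ s in Ioi (u y), 1 / Real.sqrt (Real.exp (2*s) - 2*s - 1) :=
      setIntegral_mono_set hi hnn (HasSubset.Subset.eventuallyLE hsub)
    rw [hI] at h2
    linarith
  -- lower bound: exp (-(u y)) ≤ y
  have hlow : Real.exp (-(u y)) ≤ y := by
    have := F_lower (hpos y hy0) hi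
    rwa [hI] at this
  have hll : 0 ≤ u y + Real.log y := by
    have : -(u y) ≤ Real.log y := (Real.le_log_iff_exp_le hy0).2 hlow
    linarith
  -- upper bound
  have hup : y ≤ Real.exp (d - u y) := by
    have hpt : ∀ s ∈ Ioi (u y),
        1 / Real.sqrt (Real.exp (2*s) - 2*s - 1) ≤ Real.exp d * Real.exp (-s) := by
      intro s hs
      have hss : s₀ < s := lt_trans hus hs
      have hd1 := hden s hss
      have hspos : 0 < s := lt_trans hs₀pos hss
      have hdp := den_pos hspos
      have hsq : Real.exp (s - d) ≤ Real.sqrt (Real.exp (2*s) - 2*s - 1) := by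
        have he : Real.exp (s-d) = Real.sqrt (c * Real.exp (2*s)) := by
          rw [show c * Real.exp (2*s) = Real.exp (s-d) * Real.exp (s-d) by
              rw [hc, ← Real.exp_add, ← Real.exp_add]; ring_nf,
            Real.sqrt_mul_self (Real.exp_pos _).le]
        rw [he]
        exact Real.sqrt_le_sqrt hd1
      have hsqpos : 0 < Real.sqrt (Real.exp (2*s) - 2*s - 1) := Real.sqrt_pos.2 hdp
      rw [one_div]
      calc (Real.sqrt (Real.exp (2*s) - 2*s - 1))⁻¹ ≤ (Real.exp (s - d))⁻¹ :=
            inv_anti₀ (Real.exp_pos _) hsq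
        _ = Real.exp d * Real.exp (-s) := by
            rw [← Real.exp_neg, ← Real.exp_add]; ring_nf
    have hgint : IntegrableOn (fun s => Real.exp d * Real.exp (-s)) (Ioi (u y)) :=
      (exp_neg_int (u y)).const_mul _
    have h5 := setIntegral_mono_on hi hgint measurableSet_Ioi hpt
    rw [hI, MeasureTheory.integral_const_mul, integral_exp_neg_Ioi, ← Real.exp_add] at h5
    rw [sub_eq_add_neg]; exact h5
  have hlu : u y + Real.log y ≤ d := by
    have : Real.log y ≤ d - u y := (Real.log_le_iff_le_exp hy0).2 hup
    linarith
  rw [Real.dist_eq, sub_zero, abs_of_nonneg hll]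
  linarith
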